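/- Let T be a signed tree with a mismatched vertex u and Γ a disjoint signed graph on n vertices. For any 1 ≤ k ≤ n, η(T(u) ⊙^k Γ) = η(T − u) + η(Γ + u) = η(T) − 1 + η(Γ + u), where Γ + u is the subgraph of T(u) ⊙^k Γ induced by V(Γ) ∪ {u}. -/

import Mathlib

open scoped Classical

noncomputable def sadj {V : Type*} [Fintype V] [DecidableEq V]
    (G : SimpleGraph V) (σ : V → V → ℝ) : Matrix V V ℝ :=
  fun u v => if G.Adj u v then σ u v else 0

noncomputable def nullity {V : Type*} [Fintype V] [DecidableEq V]
    (A : Matrix V V ℝ) : ℕ :=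
  Module.finrank ℝ (LinearMap.ker (Matrix.mulVecLin A))

def walkSign {V : Type*} (G : SimpleGraph V) (σ : V → V → ℝ)
    {u v : V} (w : G.Walk u v) : ℝ :=
  (w.darts.map (fun d => σ d.toProd.1 d.toProd.2)).prod

def BalancedSG {V : Type*} (G : SimpleGraph V) (σ : V → V → ℝ) : Prop :=
  ∀ (u : V) (w : G.Walk u u), w.IsCycle → walkSign G σ w = 1

def IsMatchingF {V : Type*} (G : SimpleGraph V) (M : Finset (Sym2 V)) : Prop :=
  (∀ e ∈ M, e ∈ G.edgeSet) ∧
  ∀ e ∈ M, ∀ f ∈ M, e ≠ f → ∀ v : V, ¬(v ∈ e ∧ v ∈ f)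

noncomputable def matchingNumber {V : Type*} (G : SimpleGraph V) : ℕ :=
  sSup {k | ∃ M : Finset (Sym2 V), IsMatchingF G M ∧ M.card = k}

def MatchedIn {V : Type*} (G : SimpleGraph V) (u : V) : Prop :=
  ∀ M : Finset (Sym2 V), IsMatchingF G M → M.card = matchingNumber G → ∃ e ∈ M, u ∈ e

def MismatchedIn {V : Type*} (G : SimpleGraph V) (u : V) : Prop :=
  ∃ M : Finset (Sym2 V), IsMatchingF G M ∧ M.card = matchingNumber G ∧ ∀ e ∈ M, u ∉ e

/-- The k-joining graph: disjoint union of T and Γ plus edges from u to the vertices of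
the chosen set S ⊆ V(Γ). -/
def joinGraph {V₁ V₂ : Type*} (T : SimpleGraph V₁) (Γ : SimpleGraph V₂)
    (u : V₁) (S : Finset V₂) : SimpleGraph (V₁ ⊕ V₂) :=
  SimpleGraph.fromRel (fun p q =>
    match p, q with
    | Sum.inl a, Sum.inl b => T.Adj a b
    | Sum.inr a, Sum.inr b => Γ.Adj a b
    | Sum.inl a, Sum.inr b => a = u ∧ b ∈ S
    | Sum.inr _, Sum.inl _ => False)



section AuxLinAlg
open Matrix

lemma nullity_add_rank {α : Type*} [Fintype α] [DecidableEq α] (A : Matrix α α ℝ) :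
    nullity A + A.rank = Fintype.card α := by
  have h := LinearMap.finrank_range_add_finrank_ker (Matrix.mulVecLin A)
  rw [Module.finrank_pi] at h
  rw [nullity, Matrix.rank]
  omega

lemma nullity_PAQ {α : Type*} [Fintype α] [DecidableEq α] (P A Q : Matrix α α ℝ)
    (hP : IsUnit P.det) (hQ : IsUnit Q.det) :
    nullity (P * A * Q) = nullity A := by
  have hr : (P * A * Q).rank = A.rank := by
    rw [rank_mul_eq_left_of_isUnit_det _ _ hQ, rank_mul_eq_right_of_isUnit_det _ _ hP]
  have h1 := nullity_add_rank (P * A * Q)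
  have h2 := nullity_add_rank A
  omega

lemma nullity_submatrix_equiv {α β : Type*} [Fintype α] [DecidableEq α] [Fintype β]
    [DecidableEq β] (e : β ≃ α) (A : Matrix α α ℝ) :
    nullity (A.submatrix e e) = nullity A := by
  have hr : (A.submatrix e e).rank = A.rank := by
    have : A.submatrix ⇑e ⇑e = reindex e.symm e.symm A := by
      ext i j; simp
    rw [this, rank_reindex]
  have h1 := nullity_add_rank (A.submatrix ⇑e ⇑e)
  have h2 := nullity_add_rank A
  have hc : Fintype.card β = Fintype.card α := Fintype.card_congr e
  omega

lemma nullity_fromBlocks_diag {α β : Type*} [Fintype α] [DecidableEq α] [Fintype β]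
    [DecidableEq β] (A : Matrix α α ℝ) (D : Matrix β β ℝ) :
    nullity (fromBlocks A 0 0 D) = nullity A + nullity D := by
  have hker : ∀ x : (α ⊕ β) → ℝ, (fromBlocks A 0 0 D).mulVecLin x = 0 ↔
      A.mulVecLin (x ∘ Sum.inl) = 0 ∧ D.mulVecLin (x ∘ Sum.inr) = 0 := by
    intro x
    rw [mulVecLin_apply, fromBlocks_mulVec]
    simp only [zero_mulVec, add_zero, zero_add, mulVecLin_apply]
    constructor
    · intro h
      constructor
      · ext a; exact congrFun h (Sum.inl a)
      · ext b; exact congrFun h (Sum.inr b)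
    · rintro ⟨h1, h2⟩
      ext p
      cases p with
      | inl a => exact congrFun h1 a
      | inr b => exact congrFun h2 b
  let e : (LinearMap.ker (fromBlocks A 0 0 D).mulVecLin) ≃ₗ[ℝ]
      (LinearMap.ker A.mulVecLin) × (LinearMap.ker D.mulVecLin) :=
    { toFun := fun x => (⟨x.1 ∘ Sum.inl, ((hker x.1).mp x.2).1⟩,
        ⟨x.1 ∘ Sum.inr, ((hker x.1).mp x.2).2⟩)
      invFun := fun y => ⟨Sum.elim y.1.1 y.2.1, by
        rw [LinearMap.mem_ker, hker]
        exact ⟨y.1.2, y.2.2⟩⟩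
      map_add' := fun x y => rfl
      map_smul' := fun c x => rfl
      left_inv := fun x => by
        ext p; cases p <;> rfl
      right_inv := fun y => by
        constructor <;> rfl }
  rw [nullity, e.finrank_eq, Module.finrank_prod]
  rfl

lemma nullity_split {α β : Type*} [Fintype α] [DecidableEq α] [Fintype β] [DecidableEq β]
    (A₁₁ : Matrix α α ℝ) (A₁₂ : Matrix α β ℝ) (A₂₁ : Matrix β α ℝ) (A₂₂ : Matrix β β ℝ)
    (M : Matrix β α ℝ)
    (h1 : M * A₁₁ + A₂₁ = 0) (h2 : A₁₁ * Mᵀ + A₁₂ = 0) (h3 : M * A₁₂ = 0) :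
    nullity (fromBlocks A₁₁ A₁₂ A₂₁ A₂₂) = nullity A₁₁ + nullity A₂₂ := by
  have h1' : A₂₁ = -(M * A₁₁) := eq_neg_of_add_eq_zero_right h1
  have h2' : A₁₂ = -(A₁₁ * Mᵀ) := eq_neg_of_add_eq_zero_right h2
  subst h1' h2'
  have h3' : M * (A₁₁ * Mᵀ) = 0 := by
    have := h3
    rw [Matrix.mul_neg, neg_eq_zero] at this
    exact this
  have key : fromBlocks 1 0 M 1 * fromBlocks A₁₁ (-(A₁₁ * Mᵀ)) (-(M * A₁₁)) A₂₂ *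
      fromBlocks 1 Mᵀ 0 1 = fromBlocks A₁₁ 0 0 A₂₂ := by
    rw [fromBlocks_multiply, fromBlocks_multiply]
    simp only [Matrix.one_mul, Matrix.mul_one, Matrix.zero_mul, Matrix.mul_zero, add_zero,
      zero_add, Matrix.mul_neg, Matrix.neg_mul, add_neg_cancel, neg_add_cancel, h3', neg_zero,
      Matrix.zero_mul]
  have hP : IsUnit (fromBlocks (1 : Matrix α α ℝ) 0 M 1).det := by
    rw [det_fromBlocks_zero₁₂]
    simp
  have hQ : IsUnit (fromBlocks (1 : Matrix α α ℝ) Mᵀ 0 1).det := by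
    rw [det_fromBlocks_zero₂₁]
    simp
  calc nullity (fromBlocks A₁₁ (-(A₁₁ * Mᵀ)) (-(M * A₁₁)) A₂₂)
      = nullity (fromBlocks 1 0 M 1 * fromBlocks A₁₁ (-(A₁₁ * Mᵀ)) (-(M * A₁₁)) A₂₂ *
          fromBlocks 1 Mᵀ 0 1) :=
        (nullity_PAQ _ _ _ hP hQ).symm
    _ = nullity (fromBlocks A₁₁ 0 0 A₂₂) := by rw [key]
    _ = nullity A₁₁ + nullity A₂₂ := nullity_fromBlocks_diag _ _

end AuxLinAlg

section AuxComb
section MatchingBasics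
variable {V : Type*} [Fintype V] [DecidableEq V] (G : SimpleGraph V)

lemma matching_bdd : BddAbove {k | ∃ M : Finset (Sym2 V), IsMatchingF G M ∧ M.card = k} := by
  refine ⟨Fintype.card (Sym2 V), ?_⟩
  rintro k ⟨M, _, rfl⟩
  exact Finset.card_le_univ M

lemma matching_card_le {M : Finset (Sym2 V)} (h : IsMatchingF G M) :
    M.card ≤ matchingNumber G :=
  le_csSup (matching_bdd G) ⟨M, h, rfl⟩

lemma exists_max_matching :
    ∃ M : Finset (Sym2 V), IsMatchingF G M ∧ M.card = matchingNumber G := by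
  have h0 : (0 : ℕ) ∈ {k | ∃ M : Finset (Sym2 V), IsMatchingF G M ∧ M.card = k} :=
    ⟨∅, ⟨by simp, by simp⟩, rfl⟩
  have := Nat.sSup_mem ⟨0, h0⟩ (matching_bdd G)
  obtain ⟨M, hM, hcard⟩ := this
  exact ⟨M, hM, hcard⟩

end MatchingBasics

section Transfer
variable {V : Type*} [Fintype V] [DecidableEq V] (G : SimpleGraph V) (s : Set V)

/-- lifting a matching of an induced subgraph to the ambient graph -/
lemma matching_lift {M' : Finset (Sym2 ↥s)} (h : IsMatchingF (G.induce s) M') :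
    IsMatchingF G (M'.image (Sym2.map (Subtype.val))) ∧
    (M'.image (Sym2.map (Subtype.val))).card = M'.card ∧
    (∀ e ∈ M'.image (Sym2.map (Subtype.val)), ∀ v : V, v ∈ e → v ∈ s) := by
  have hinj : Function.Injective (Sym2.map (Subtype.val : ↥s → V)) :=
    Sym2.map.injective Subtype.val_injective
  refine ⟨⟨?_, ?_⟩, Finset.card_image_of_injective _ hinj, ?_⟩
  · intro e he
    obtain ⟨e', he', rfl⟩ := Finset.mem_image.mp he
    revert he'
    refine Sym2.inductionOn e' (fun x y hxy => ?_)
    rw [Sym2.map_pair_eq, SimpleGraph.mem_edgeSet]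
    exact h.1 _ hxy
  · rintro e he f hf hef v ⟨hve, hvf⟩
    obtain ⟨e', he', rfl⟩ := Finset.mem_image.mp he
    obtain ⟨f', hf', rfl⟩ := Finset.mem_image.mp hf
    obtain ⟨a, hae, rfl⟩ := Sym2.mem_map.mp hve
    obtain ⟨b, hbf, hba⟩ := Sym2.mem_map.mp hvf
    have : b = a := Subtype.val_injective hba
    subst this
    exact h.2 e' he' f' hf' (fun hh => hef (by rw [hh])) b ⟨hae, hbf⟩
  · intro e he v hv
    obtain ⟨e', he', rfl⟩ := Finset.mem_image.mp he
    obtain ⟨a, _, rfl⟩ := Sym2.mem_map.mp hv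
    exact a.2

/-- restricting a matching avoiding the removed vertices to an induced subgraph -/
lemma matching_restrict {N : Finset (Sym2 V)} (hN : IsMatchingF G N)
    (hs : ∀ e ∈ N, ∀ v : V, v ∈ e → v ∈ s) :
    ∃ N' : Finset (Sym2 ↥s), IsMatchingF (G.induce s) N' ∧ N'.card = N.card ∧
      ∀ e' ∈ N', Sym2.map (Subtype.val) e' ∈ N := by
  have hinj : Function.Injective (Sym2.map (Subtype.val : ↥s → V)) :=
    Sym2.map.injective Subtype.val_injective
  refine ⟨Finset.univ.filter (fun e' => Sym2.map (Subtype.val) e' ∈ N), ⟨?_, ?_⟩, ?_, ?_⟩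
  · intro e' he'
    have hmem : Sym2.map (Subtype.val) e' ∈ N := (Finset.mem_filter.mp he').2
    revert hmem
    refine Sym2.inductionOn e' (fun x y hxy => ?_)
    rw [Sym2.map_pair_eq] at hxy
    have := hN.1 _ hxy
    rw [SimpleGraph.mem_edgeSet] at this
    exact this
  · rintro e' he' f' hf' hef v ⟨hve, hvf⟩
    refine hN.2 _ (Finset.mem_filter.mp he').2 _ (Finset.mem_filter.mp hf').2
      (fun hh => hef (hinj hh)) v.1 ⟨?_, ?_⟩
    · exact Sym2.mem_map.mpr ⟨v, hve, rfl⟩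
    · exact Sym2.mem_map.mpr ⟨v, hvf, rfl⟩
  · -- card
    apply Finset.card_bij (fun e' _ => Sym2.map (Subtype.val) e')
    · intro e' he'; exact (Finset.mem_filter.mp he').2
    · intro a ha b hb hab; exact hinj hab
    · intro e he
      have : ∀ v : V, v ∈ e → v ∈ s := hs e he
      revert he this
      refine Sym2.inductionOn e (fun x y he h2 => ?_)
      have hx : x ∈ s := h2 x (by simp)
      have hy : y ∈ s := h2 y (by simp)
      refine ⟨s(⟨x, hx⟩, ⟨y, hy⟩), ?_, ?_⟩
      · rw [Finset.mem_filter, Sym2.map_pair_eq]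
        exact ⟨Finset.mem_univ _, by simpa using he⟩
      · rw [Sym2.map_pair_eq]
  · intro e' he'; exact (Finset.mem_filter.mp he').2

end Transfer

section Leaf
open SimpleGraph Walk

lemma exists_leaf {V : Type*} [Fintype V] [DecidableEq V] {G : SimpleGraph V}
    (hG : G.IsAcyclic) {v₀ w₀ : V} (h₀ : G.Adj v₀ w₀) (u : V) :
    ∃ l p, G.Adj l p ∧ (∀ q, G.Adj l q → q = p) ∧ l ≠ u := by
  classical
  set L : Set ℕ := {n | ∃ (a b : V) (w : G.Walk a b), w.IsPath ∧ w.length = n} with hL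
  have hne : (1 : ℕ) ∈ L := by
    refine ⟨v₀, w₀, Walk.cons h₀ Walk.nil, ?_, rfl⟩
    simp [Walk.cons_isPath_iff, h₀.ne]
  have hbdd : BddAbove L := by
    refine ⟨Fintype.card V, ?_⟩
    rintro n ⟨a, b, w, hw, rfl⟩
    exact le_of_lt hw.length_lt
  obtain ⟨a, b, w, hw, hlen⟩ := Nat.sSup_mem ⟨1, hne⟩ hbdd
  have hmax : ∀ (c d : V) (q : G.Walk c d), q.IsPath → q.length ≤ w.length := by
    intro c d q hq
    rw [hlen]
    exact le_csSup hbdd ⟨c, d, q, hq, rfl⟩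
  have hlen1 : 1 ≤ w.length := by
    rw [hlen]
    exact le_csSup hbdd hne
  have key : ∀ (a b : V) (w' : G.Walk a b), w'.IsPath →
      (∀ (c d : V) (q : G.Walk c d), q.IsPath → q.length ≤ w'.length) → 1 ≤ w'.length →
      ∃ y, G.Adj a y ∧ ∀ c, G.Adj a c → c = y := by
    clear hlen hlen1 hmax hw w b a
    intro a b w hw hmax hlen
    cases w with
    | nil => simp at hlen
    | @cons _ y _ h q =>
      refine ⟨y, h, fun c hc => ?_⟩
      by_contra hcy
      by_cases hsup : c ∈ (Walk.cons h q).support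
      · have hca : c ≠ a := fun hh => G.irrefl (hh ▸ hc)
        have hcq : c ∈ q.support := by
          rw [Walk.support_cons] at hsup
          rcases List.mem_cons.mp hsup with h1 | h1
          · exact absurd h1 hca
          · exact h1
        have hq : q.IsPath := hw.of_cons
        set t := q.takeUntil c hcq with ht_def
        have ht : t.IsPath := hq.takeUntil hcq
        have hat : a ∉ t.support := fun hmem =>
          ((Walk.cons_isPath_iff h q).mp hw).2 (Walk.support_takeUntil_subset _ hcq hmem)
        have hpath2 : (Walk.cons h t).IsPath := (Walk.cons_isPath_iff h t).mpr ⟨ht, hat⟩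
        have hcyc : (Walk.cons (G.adj_symm hc) (Walk.cons h t)).IsCycle := by
          rw [Walk.cons_isCycle_iff]
          refine ⟨hpath2, fun hmem => ?_⟩
          rw [Walk.edges_cons] at hmem
          rcases List.mem_cons.mp hmem with he | he
          · rw [Sym2.eq_iff] at he
            rcases he with ⟨h1, h2⟩ | ⟨h1, h2⟩
            · exact hca h1
            · exact hcy h1
          · exact hat (Walk.snd_mem_support_of_mem_edges t he)
        exact hG _ hcyc
      · have hp2 : (Walk.cons (G.adj_symm hc) (Walk.cons h q)).IsPath :=
          (Walk.cons_isPath_iff _ _).mpr ⟨hw, hsup⟩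
        have := hmax _ _ _ hp2
        rw [Walk.length_cons] at this
        omega
  have hab : a ≠ b := by
    intro hh
    subst hh
    have := (Walk.isPath_iff_eq_nil).mp hw
    subst this
    simp at hlen1
  obtain ⟨y, hay, hya⟩ := key a b w hw hmax hlen1
  obtain ⟨z, hbz, hbz'⟩ := key b a w.reverse hw.reverse
    (fun c d q hq => by rw [Walk.length_reverse]; exact hmax c d q hq)
    (by rw [Walk.length_reverse]; exact hlen1)
  by_cases hau : a = u
  · exact ⟨b, z, hbz, hbz', fun hh => hab (hau.trans hh.symm)⟩
  · exact ⟨a, y, hay, hya, hau⟩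

end Leaf

end AuxComb

section AuxKernel
universe uTK

theorem tree_kernel : ∀ (n : ℕ) {V : Type uTK} [Fintype V] [DecidableEq V]
    (G : SimpleGraph V), Fintype.card V ≤ n → G.IsAcyclic →
    ∀ (σ : V → V → ℝ), (∀ a b, σ a b = σ b a) →
    (∀ a b, G.Adj a b → σ a b = 1 ∨ σ a b = -1) →
    ∀ (u : V), MismatchedIn G u →
    ∃ x : V → ℝ, x u ≠ 0 ∧ (sadj G σ).mulVec x = 0 := by
  intro n
  induction n with
  | zero =>
    intro V _ _ G hcard _ σ _ _ u _
    exact absurd hcard (by have := Fintype.card_pos_iff.mpr ⟨u⟩; omega)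
  | succ n ih =>
    intro V _ _ G hcard hG σ hsym hpm u hu
    by_cases hedge : ∃ a b, G.Adj a b
    · obtain ⟨v₀, w₀, h₀⟩ := hedge
      obtain ⟨l, p, hlp, huniq, hlu⟩ := exists_leaf hG h₀ u
      obtain ⟨M, hM, hMcard, hMu⟩ := hu
      have hlonly : ∀ (K : Finset (Sym2 V)), IsMatchingF G K → ∀ e ∈ K, l ∈ e → e = s(l, p) := by
        intro K hK e he hle
        obtain ⟨c, rfl⟩ := Sym2.mem_iff_exists.mp hle
        have hadj : G.Adj l c := (SimpleGraph.mem_edgeSet G).mp (hK.1 _ he)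
        rw [huniq c hadj]
      -- Step 1: a maximum matching avoiding u and containing s(l,p)
      have hNex : ∃ N : Finset (Sym2 V), IsMatchingF G N ∧ N.card = matchingNumber G ∧
          (∀ e ∈ N, u ∉ e) ∧ s(l, p) ∈ N := by
        by_cases hlpM : s(l, p) ∈ M
        · exact ⟨M, hM, hMcard, hMu, hlpM⟩
        · have hpcov : ∃ e ∈ M, p ∈ e := by
            by_contra hpc
            push_neg at hpc
            have hlcov : ∀ e ∈ M, l ∉ e := by
              intro e he hle
              exact hlpM ((hlonly M hM e he hle) ▸ he)
            have hins : IsMatchingF G (insert s(l, p) M) := by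
              constructor
              · intro e he
                rcases Finset.mem_insert.mp he with rfl | he
                · exact (SimpleGraph.mem_edgeSet G).mpr hlp
                · exact hM.1 e he
              · intro e he f hf hef v ⟨hve, hvf⟩
                rcases Finset.mem_insert.mp he with rfl | he <;>
                  rcases Finset.mem_insert.mp hf with rfl | hf
                · exact hef rfl
                · rcases Sym2.mem_iff.mp hve with h | h
                  · exact hlcov f hf (h ▸ hvf)
                  · exact hpc f hf (h ▸ hvf)
                · rcases Sym2.mem_iff.mp hvf with h | h
                  · exact hlcov e he (h ▸ hve)
                  · exact hpc e he (h ▸ hve)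
                · exact hM.2 e he f hf hef v ⟨hve, hvf⟩
            have hle := matching_card_le G hins
            rw [Finset.card_insert_of_notMem hlpM] at hle
            omega
          obtain ⟨e, heM, hpe⟩ := hpcov
          obtain ⟨c, rfl⟩ := Sym2.mem_iff_exists.mp hpe
          have hlpnotmem : s(l, p) ∉ M.erase s(p, c) := fun hh => hlpM (Finset.mem_of_mem_erase hh)
          have hnew : ∀ f ∈ M.erase s(p, c), ∀ v : V, ¬(v ∈ s(l, p) ∧ v ∈ f) := by
            rintro f hf v ⟨hv1, hv2⟩
            rcases Sym2.mem_iff.mp hv1 with rfl | rfl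
            · exact hlpM ((hlonly M hM f (Finset.mem_of_mem_erase hf) hv2) ▸
                (Finset.mem_of_mem_erase hf))
            · exact hM.2 f (Finset.mem_of_mem_erase hf) s(v, c) heM
                (Finset.ne_of_mem_erase hf) v ⟨hv2, by simp⟩
          refine ⟨insert s(l, p) (M.erase s(p, c)), ⟨?_, ?_⟩, ?_, ?_, Finset.mem_insert_self _ _⟩
          · intro e he
            rcases Finset.mem_insert.mp he with rfl | he
            · exact (SimpleGraph.mem_edgeSet G).mpr hlp
            · exact hM.1 e (Finset.mem_of_mem_erase he)
          · intro e he f hf hef v ⟨hve, hvf⟩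
            rcases Finset.mem_insert.mp he with rfl | he <;>
              rcases Finset.mem_insert.mp hf with rfl | hf
            · exact hef rfl
            · exact hnew f hf v ⟨hve, hvf⟩
            · exact hnew e he v ⟨hvf, hve⟩
            · exact hM.2 e (Finset.mem_of_mem_erase he) f (Finset.mem_of_mem_erase hf) hef
                v ⟨hve, hvf⟩
          · rw [Finset.card_insert_of_notMem hlpnotmem, Finset.card_erase_of_mem heM]
            have hMpos : 1 ≤ M.card := Finset.card_pos.mpr ⟨_, heM⟩
            omega
          · intro e he hue
            rcases Finset.mem_insert.mp he with rfl | he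
            · rcases Sym2.mem_iff.mp hue with h | h
              · exact hlu h.symm
              · exact hMu _ heM (h ▸ (by simp : p ∈ s(p, c)))
            · exact hMu e (Finset.mem_of_mem_erase he) hue
      obtain ⟨N, hN, hNcard, hNu, hlpN⟩ := hNex
      have hpu : p ≠ u := by
        rintro rfl
        exact hNu _ hlpN (by simp)
      set s : Set V := {v | v ≠ l ∧ v ≠ p} with hs_def
      have hN0 : ∀ e ∈ N.erase s(l, p), ∀ v : V, v ∈ e → v ∈ s := by
        intro e he v hv
        constructor
        · rintro rfl
          exact (Finset.ne_of_mem_erase he)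
            (hlonly N hN e (Finset.mem_of_mem_erase he) hv)
        · rintro rfl
          exact hN.2 e (Finset.mem_of_mem_erase he) s(l, v) hlpN
            (Finset.ne_of_mem_erase he) v ⟨hv, by simp⟩
      have hN0m : IsMatchingF G (N.erase s(l, p)) := by
        refine ⟨fun e he => hN.1 e (Finset.mem_of_mem_erase he), ?_⟩
        intro e he f hf hef v hv
        exact hN.2 e (Finset.mem_of_mem_erase he) f (Finset.mem_of_mem_erase hf) hef v hv
      obtain ⟨N', hN', hN'card, hN'mem⟩ := matching_restrict G s hN0m hN0
      have hNpos : 1 ≤ N.card := Finset.card_pos.mpr ⟨_, hlpN⟩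
      have hN'card2 : N'.card = matchingNumber G - 1 := by
        rw [hN'card, Finset.card_erase_of_mem hlpN, hNcard]
      have hmu_ub : ∀ M' : Finset (Sym2 ↥s), IsMatchingF (G.induce s) M' →
          M'.card + 1 ≤ matchingNumber G := by
        intro M' hM'
        obtain ⟨him, hcardim, hall⟩ := matching_lift G s hM'
        have hlpnot : s(l, p) ∉ M'.image (Sym2.map (Subtype.val)) := by
          intro hh
          exact (hall _ hh l (by simp)).1 rfl
        have hins : IsMatchingF G (insert s(l, p) (M'.image (Sym2.map (Subtype.val)))) := by
          constructor
          · intro e he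
            rcases Finset.mem_insert.mp he with rfl | he
            · exact (SimpleGraph.mem_edgeSet G).mpr hlp
            · exact him.1 e he
          · intro e he f hf hef v ⟨hve, hvf⟩
            rcases Finset.mem_insert.mp he with rfl | he <;>
              rcases Finset.mem_insert.mp hf with rfl | hf
            · exact hef rfl
            · rcases Sym2.mem_iff.mp hve with h | h
              · exact (hall f hf _ hvf).1 h
              · exact (hall f hf _ hvf).2 h
            · rcases Sym2.mem_iff.mp hvf with h | h
              · exact (hall e he _ hve).1 h
              · exact (hall e he _ hve).2 h
            · exact him.2 e he f hf hef v ⟨hve, hvf⟩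
        have hle := matching_card_le G hins
        rw [Finset.card_insert_of_notMem hlpnot, hcardim] at hle
        omega
      have hmuG' : matchingNumber (G.induce s) = matchingNumber G - 1 := by
        obtain ⟨K, hK, hKcard⟩ := exists_max_matching (G.induce s)
        have h1 := hmu_ub K hK
        have h2 := matching_card_le (G.induce s) hN'
        omega
      have hus : u ∈ s := ⟨Ne.symm hlu, Ne.symm hpu⟩
      have hmis' : MismatchedIn (G.induce s) ⟨u, hus⟩ := by
        refine ⟨N', hN', by omega, ?_⟩
        intro e' he' hue'
        exact hNu _ (Finset.mem_of_mem_erase (hN'mem e' he'))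
          (Sym2.mem_map.mpr ⟨⟨u, hus⟩, hue', rfl⟩)
      have hG' : (G.induce s).IsAcyclic := by
        intro v c hc
        have hemb : Function.Injective
            (SimpleGraph.Embedding.comap (Function.Embedding.subtype (· ∈ s)) G).toHom := by
          intro a b hab
          exact Subtype.val_injective hab
        exact hG _ (hc.map hemb)
      have hcard' : Fintype.card ↥s ≤ n := by
        have hls : l ∉ s := fun hh => hh.1 rfl
        have hlt : Fintype.card ↥s < Fintype.card V :=
          Fintype.card_lt_of_injective_of_notMem Subtype.val Subtype.val_injective
            (by rw [Subtype.range_coe]; exact hls)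
        omega
      obtain ⟨y, hyu, hy⟩ := ih (G.induce s) hcard' hG' (fun a b => σ a.1 b.1)
        (fun a b => hsym a.1 b.1) (fun a b hab => hpm a.1 b.1 hab) ⟨u, hus⟩ hmis'
      -- extension
      set A := sadj G σ with hA_def
      have hmv : ∀ (W : Type uTK) [Fintype W] (B : Matrix W W ℝ) (z : W → ℝ) (i : W),
          (B.mulVec z) i = ∑ j, B i j * z j := by
        intro W _ B z i
        rfl
      have hσpl : σ p l ≠ 0 := by
        rcases hpm p l hlp.symm with h | h <;> rw [h] <;> norm_num
      set Y : V → ℝ := fun v => if h : v ∈ s then y ⟨v, h⟩ else 0 with hY_def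
      set t : ℝ := ∑ w : V, A p w * Y w with ht_def
      refine ⟨fun v => if v = l then -t / σ p l else Y v, ?_, ?_⟩
      · have hul : u ≠ l := Ne.symm hlu
        simp only [if_neg hul, hY_def, dif_pos hus]
        exact hyu
      · funext v
        set x : V → ℝ := fun v => if v = l then -t / σ p l else Y v with hx_def
        show (A.mulVec x) v = 0
        rw [hmv]
        have hYl : Y l = 0 := by
          rw [hY_def]
          exact dif_neg (fun hh => hh.1 rfl)
        have hYp : Y p = 0 := by
          rw [hY_def]
          exact dif_neg (fun hh => hh.2 rfl)
        by_cases hvl : v = l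
        · subst hvl
          apply Finset.sum_eq_zero
          intro w _
          by_cases hw : G.Adj v w
          · have : w = p := huniq w hw
            subst this
            have : x w = 0 := by
              rw [hx_def]
              simp only [if_neg (Ne.symm hlp.ne), hYp]
            rw [this, mul_zero]
          · rw [hA_def]
            show (if G.Adj v w then σ v w else 0) * x w = 0
            rw [if_neg hw, zero_mul]
        · by_cases hvp : v = p
          · subst hvp
            rw [← Finset.add_sum_erase _ _ (Finset.mem_univ l)]
            have h2 : ∀ w ∈ Finset.univ.erase l, A v w * x w = A v w * Y w := by
              intro w hw
              rw [hx_def]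
              simp only [if_neg (Finset.mem_erase.mp hw).1]
            rw [Finset.sum_congr rfl h2]
            have h3 : ∑ w ∈ Finset.univ.erase l, A v w * Y w = t := by
              rw [ht_def, ← Finset.add_sum_erase _ _ (Finset.mem_univ l), hYl, mul_zero, zero_add]
            rw [h3]
            have h4 : A v l = σ v l := by
              rw [hA_def]
              show (if G.Adj v l then σ v l else 0) = σ v l
              rw [if_pos hlp.symm]
            have h5 : x l = -t / σ v l := by rw [hx_def]; simp
            rw [h4, h5]
            field_simp
            ring
          · have hvs : v ∈ s := ⟨hvl, hvp⟩
            have h2 : ∀ w ∈ Finset.univ, A v w * x w = A v w * Y w := by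
              intro w _
              by_cases hwl : w = l
              · subst hwl
                have : A v w = 0 := by
                  rw [hA_def]
                  show (if G.Adj v w then σ v w else 0) = 0
                  rw [if_neg (fun hh => hvp (huniq v hh.symm))]
                rw [this, zero_mul, zero_mul]
              · rw [hx_def]
                simp only [if_neg hwl]
            rw [Finset.sum_congr rfl h2]
            have h3 : ∑ w : V, A v w * Y w = ∑ w : ↥s, A v w.1 * Y w.1 := by
              rw [← Finset.sum_subtype (Finset.univ.filter (· ∈ s))
                (by intro x; simp) (fun w => A v w * Y w)]
              apply (Finset.sum_filter_of_ne ?_).symm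
              intro w _ hw
              by_contra hws
              apply hw
              have : Y w = 0 := by rw [hY_def]; exact dif_neg hws
              rw [this, mul_zero]
            rw [h3]
            have h4 : ∀ w : ↥s, A v w.1 * Y w.1 =
                sadj (G.induce s) (fun a b => σ a.1 b.1) ⟨v, hvs⟩ w * y w := by
              intro w
              have hYw : Y w.1 = y w := by
                simp only [hY_def]
                exact dif_pos w.2
              rw [hYw, hA_def]
              show (if G.Adj v w.1 then σ v w.1 else 0) * y w =
                (if (G.induce s).Adj ⟨v, hvs⟩ w then σ v w.1 else 0) * y w
              exact congrArg (· * y w) (if_congr Iff.rfl rfl rfl)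
            rw [Finset.sum_congr rfl (fun w _ => h4 w)]
            have := congrFun hy ⟨v, hvs⟩
            rw [hmv] at this
            simpa using this
    · refine ⟨fun v => if v = u then 1 else 0, by simp, ?_⟩
      have hzero : sadj G σ = 0 := by
        ext a b
        show (if G.Adj a b then σ a b else 0) = 0
        rw [if_neg (fun hh => hedge ⟨a, b, hh⟩)]
      rw [hzero, Matrix.zero_mulVec]

end AuxKernel

/-- if u is mismatched in the signed tree T, then for any 1 ≤ k ≤ n,
η(T(u) ⊙ᵏ Γ) = η(T − u) + η(Γ + u) = η(T) − 1 + η(Γ + u). -/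
theorem stmt15 {V₁ V₂ : Type*} [Fintype V₁] [DecidableEq V₁] [Fintype V₂] [DecidableEq V₂]
    (T : SimpleGraph V₁) (σ₁ : V₁ → V₁ → ℝ) (hT : T.IsTree)
    (hsym₁ : ∀ a b, σ₁ a b = σ₁ b a)
    (hpm₁ : ∀ a b, T.Adj a b → σ₁ a b = 1 ∨ σ₁ a b = -1)
    (Γ : SimpleGraph V₂) (σ₂ : V₂ → V₂ → ℝ)
    (hsym₂ : ∀ a b, σ₂ a b = σ₂ b a)
    (hpm₂ : ∀ a b, Γ.Adj a b → σ₂ a b = 1 ∨ σ₂ a b = -1)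
    (u : V₁) (hu : MismatchedIn T u)
    (k : ℕ) (hk1 : 1 ≤ k) (hk2 : k ≤ Fintype.card V₂)
    (S : Finset V₂) (hS : S.card = k)
    (τ : (V₁ ⊕ V₂) → (V₁ ⊕ V₂) → ℝ)
    (hτsym : ∀ p q, τ p q = τ q p)
    (hτpm : ∀ p q, (joinGraph T Γ u S).Adj p q → τ p q = 1 ∨ τ p q = -1)
    (hτ₁ : ∀ a b : V₁, τ (Sum.inl a) (Sum.inl b) = σ₁ a b)
    (hτ₂ : ∀ a b : V₂, τ (Sum.inr a) (Sum.inr b) = σ₂ a b) :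
    nullity (sadj (joinGraph T Γ u S) τ) =
      nullity (sadj (T.induce {a | a ≠ u}) (fun a b => σ₁ a.1 b.1)) +
      nullity (sadj ((joinGraph T Γ u S).induce
          {p | (∃ b, p = Sum.inr b) ∨ p = Sum.inl u}) (fun p q => τ p.1 q.1)) ∧
    (nullity (sadj (joinGraph T Γ u S) τ) : ℤ) =
      (nullity (sadj T σ₁) : ℤ) - 1 +
      (nullity (sadj ((joinGraph T Γ u S).induce
          {p | (∃ b, p = Sum.inr b) ∨ p = Sum.inl u}) (fun p q => τ p.1 q.1)) : ℤ) := by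
  classical
  set J := joinGraph T Γ u S with hJ_def
  set AJ := sadj J τ with hAJ_def
  set AT := sadj T σ₁ with hAT_def
  -- adjacency facts
  have hJll : ∀ a b : V₁, J.Adj (Sum.inl a) (Sum.inl b) ↔ T.Adj a b := by
    intro a b
    rw [hJ_def, joinGraph, SimpleGraph.fromRel_adj]
    constructor
    · rintro ⟨hne, h | h⟩
      · exact h
      · exact h.symm
    · intro h
      exact ⟨fun hh => h.ne (Sum.inl.inj hh), Or.inl h⟩
  have hJlr : ∀ (a : V₁) (b : V₂), J.Adj (Sum.inl a) (Sum.inr b) ↔ (a = u ∧ b ∈ S) := by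
    intro a b
    rw [hJ_def, joinGraph, SimpleGraph.fromRel_adj]
    constructor
    · rintro ⟨hne, h | h⟩
      · exact h
      · exact h.elim
    · intro h
      exact ⟨fun hh => Sum.inl_ne_inr hh, Or.inl h⟩
  -- entries
  have hAll : ∀ a b : V₁, AJ (Sum.inl a) (Sum.inl b) = AT a b := by
    intro a b
    show (if J.Adj (Sum.inl a) (Sum.inl b) then τ (Sum.inl a) (Sum.inl b) else 0)
        = (if T.Adj a b then σ₁ a b else 0)
    by_cases h : T.Adj a b
    · rw [if_pos ((hJll a b).mpr h), if_pos h, hτ₁]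
    · rw [if_neg (fun hh => h ((hJll a b).mp hh)), if_neg h]
  have hAlr0 : ∀ (a : V₁) (b : V₂), a ≠ u → AJ (Sum.inl a) (Sum.inr b) = 0 := by
    intro a b hau
    show (if J.Adj (Sum.inl a) (Sum.inr b) then τ (Sum.inl a) (Sum.inr b) else 0) = 0
    rw [if_neg (fun hh => hau ((hJlr a b).mp hh).1)]
  have hArl0 : ∀ (a : V₁) (b : V₂), a ≠ u → AJ (Sum.inr b) (Sum.inl a) = 0 := by
    intro a b hau
    show (if J.Adj (Sum.inr b) (Sum.inl a) then τ (Sum.inr b) (Sum.inl a) else 0) = 0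
    rw [if_neg (fun hh => hau ((hJlr a b).mp hh.symm).1)]
  have hATirr : ∀ a : V₁, AT a a = 0 := by
    intro a
    show (if T.Adj a a then σ₁ a a else 0) = 0
    rw [if_neg (T.irrefl)]
  have hATsym : ∀ a b : V₁, AT a b = AT b a := by
    intro a b
    show (if T.Adj a b then σ₁ a b else 0) = (if T.Adj b a then σ₁ b a else 0)
    by_cases h : T.Adj a b
    · rw [if_pos h, if_pos h.symm, hsym₁]
    · rw [if_neg h, if_neg (fun hh => h hh.symm)]
  -- kernel vector of T
  obtain ⟨x, hxu, hx⟩ := tree_kernel (Fintype.card V₁) T le_rfl hT.2 σ₁ hsym₁ hpm₁ u hu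
  set g : V₁ → ℝ := fun a => x a / x u with hg_def
  have hg_u : g u = 1 := div_self hxu
  have hKrow : ∀ a : V₁, ∑ b : V₁, AT a b * x b = 0 := by
    intro a
    exact congrFun hx a
  have K2 : ∀ a : V₁, ∑ b : V₁, AT a b * g b = 0 := by
    intro a
    rw [Finset.sum_congr rfl (fun b _ => (mul_div_assoc (AT a b) (x b) (x u)).symm),
      ← Finset.sum_div, hKrow a, zero_div]
  have K1 : ∀ a : V₁, ∑ b : V₁, g b * AT b a = 0 := by
    intro a
    rw [Finset.sum_congr rfl (fun b _ => by rw [mul_comm, hATsym])]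
    exact K2 a
  have hsum : ∀ f : V₁ → ℝ, (∑ b : ↥({a : V₁ | a ≠ u}), f b.1) = (∑ b : V₁, f b) - f u := by
    intro f
    rw [← Finset.sum_subtype (Finset.univ.erase u)
      (fun z => by simp [Finset.mem_erase]) f]
    rw [Finset.sum_erase_eq_sub (Finset.mem_univ u)]
  have hsum1 : ∀ a : V₁, (∑ b : ↥({a : V₁ | a ≠ u}), g b.1 * AT b.1 a) = -(AT u a) := by
    intro a
    rw [hsum (fun b => g b * AT b a), K1 a, zero_sub, hg_u, one_mul]
  have hsum2 : ∀ a : V₁, (∑ b : ↥({a : V₁ | a ≠ u}), AT a b.1 * g b.1) = -(AT a u) := by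
    intro a
    rw [hsum (fun b => AT a b * g b), K2 a, zero_sub, hg_u, mul_one]
  -- the reindexing equivalence
  let e : (↥({a : V₁ | a ≠ u}) ⊕ ↥({p : V₁ ⊕ V₂ | (∃ b, p = Sum.inr b) ∨ p = Sum.inl u}))
      ≃ (V₁ ⊕ V₂) :=
    { toFun := Sum.elim (fun a => Sum.inl a.1) (fun q => q.1)
      invFun := fun z => match z with
        | Sum.inl a => if h : a = u then Sum.inr ⟨Sum.inl u, Or.inr rfl⟩ else Sum.inl ⟨a, h⟩
        | Sum.inr b => Sum.inr ⟨Sum.inr b, Or.inl ⟨b, rfl⟩⟩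
      left_inv := by
        rintro (a | ⟨z, hz⟩)
        · dsimp only [Sum.elim_inl]
          rw [dif_neg a.2]
        · dsimp only [Sum.elim_inr]
          cases z with
          | inl a =>
            have ha : a = u := by
              rcases hz with ⟨b, hb⟩ | hb
              · exact absurd hb (fun hh => Sum.inl_ne_inr hh)
              · exact Sum.inl.inj hb
            dsimp only
            rw [dif_pos ha]
            exact congrArg Sum.inr (Subtype.ext (congrArg Sum.inl ha.symm))
          | inr b => rfl
      right_inv := by
        rintro (a | b)
        · dsimp only
          by_cases h : a = u
          · rw [dif_pos h]
            dsimp only [Sum.elim_inr]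
            rw [h]
          · rw [dif_neg h]
            rfl
        · rfl }
  have he1 : ∀ a, e (Sum.inl a) = Sum.inl a.1 := fun a => rfl
  have he2 : ∀ q, e (Sum.inr q) = q.1 := fun q => rfl
  -- block decomposition of AJ
  let D0 : Matrix (↥({a : V₁ | a ≠ u})) (↥({a : V₁ | a ≠ u})) ℝ :=
    Matrix.of fun a b => AT a.1 b.1
  let B12 : Matrix (↥({a : V₁ | a ≠ u}))
      (↥({p : V₁ ⊕ V₂ | (∃ b, p = Sum.inr b) ∨ p = Sum.inl u})) ℝ :=
    Matrix.of fun a q => AJ (Sum.inl a.1) q.1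
  let B21 : Matrix (↥({p : V₁ ⊕ V₂ | (∃ b, p = Sum.inr b) ∨ p = Sum.inl u}))
      (↥({a : V₁ | a ≠ u})) ℝ :=
    Matrix.of fun q a => AJ q.1 (Sum.inl a.1)
  let C0 : Matrix (↥({p : V₁ ⊕ V₂ | (∃ b, p = Sum.inr b) ∨ p = Sum.inl u}))
      (↥({p : V₁ ⊕ V₂ | (∃ b, p = Sum.inr b) ∨ p = Sum.inl u})) ℝ :=
    Matrix.of fun q q' => AJ q.1 q'.1
  let M0 : Matrix (↥({p : V₁ ⊕ V₂ | (∃ b, p = Sum.inr b) ∨ p = Sum.inl u}))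
      (↥({a : V₁ | a ≠ u})) ℝ :=
    Matrix.of fun q a => if q.1 = Sum.inl u then g a.1 else 0
  have hsub : AJ.submatrix ⇑e ⇑e = Matrix.fromBlocks D0 B12 B21 C0 := by
    ext i j
    cases i with
    | inl a =>
      cases j with
      | inl b =>
        show AJ (e (Sum.inl a)) (e (Sum.inl b)) = AT a.1 b.1
        rw [he1, he1, hAll]
      | inr q =>
        show AJ (e (Sum.inl a)) (e (Sum.inr q)) = AJ (Sum.inl a.1) q.1
        rw [he1, he2]
    | inr q =>
      cases j with
      | inl b =>
        show AJ (e (Sum.inr q)) (e (Sum.inl b)) = AJ q.1 (Sum.inl b.1)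
        rw [he2, he1]
      | inr q' =>
        show AJ (e (Sum.inr q)) (e (Sum.inr q')) = AJ q.1 q'.1
        rw [he2, he2]
  have h1 : M0 * D0 + B21 = 0 := by
    ext q a
    rw [Matrix.add_apply, Matrix.mul_apply, Matrix.zero_apply]
    rcases q.2 with ⟨c, hc⟩ | hc
    · rw [Finset.sum_eq_zero (fun b _ => by
        show (if q.1 = Sum.inl u then g b.1 else 0) * AT b.1 a.1 = 0
        rw [hc, if_neg (fun hh => Sum.inr_ne_inl hh), zero_mul]), zero_add]
      show AJ q.1 (Sum.inl a.1) = 0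
      rw [hc]
      exact hArl0 a.1 c a.2
    · rw [Finset.sum_congr rfl (fun b _ => by
        show (if q.1 = Sum.inl u then g b.1 else 0) * AT b.1 a.1 = g b.1 * AT b.1 a.1
        rw [hc, if_pos rfl])]
      rw [hsum1 a.1]
      show -(AT u a.1) + AJ q.1 (Sum.inl a.1) = 0
      rw [hc, hAll u a.1, neg_add_cancel]
  have h2 : D0 * Matrix.transpose M0 + B12 = 0 := by
    ext a q
    rw [Matrix.add_apply, Matrix.mul_apply, Matrix.zero_apply]
    rcases q.2 with ⟨c, hc⟩ | hc
    · rw [Finset.sum_eq_zero (fun b _ => by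
        show AT a.1 b.1 * (if q.1 = Sum.inl u then g b.1 else 0) = 0
        rw [hc, if_neg (fun hh => Sum.inr_ne_inl hh), mul_zero]), zero_add]
      show AJ (Sum.inl a.1) q.1 = 0
      rw [hc]
      exact hAlr0 a.1 c a.2
    · rw [Finset.sum_congr rfl (fun b _ => by
        show AT a.1 b.1 * (if q.1 = Sum.inl u then g b.1 else 0) = AT a.1 b.1 * g b.1
        rw [hc, if_pos rfl])]
      rw [hsum2 a.1]
      show -(AT a.1 u) + AJ (Sum.inl a.1) q.1 = 0
      rw [hc, hAll a.1 u, neg_add_cancel]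
  have h3 : M0 * B12 = 0 := by
    ext q q'
    rw [Matrix.mul_apply, Matrix.zero_apply]
    rcases q.2 with ⟨c, hc⟩ | hc
    · exact Finset.sum_eq_zero (fun b _ => by
        show (if q.1 = Sum.inl u then g b.1 else 0) * AJ (Sum.inl b.1) q'.1 = 0
        rw [hc, if_neg (fun hh => Sum.inr_ne_inl hh), zero_mul])
    · rcases q'.2 with ⟨c', hc'⟩ | hc'
      · exact Finset.sum_eq_zero (fun b _ => by
          show (if q.1 = Sum.inl u then g b.1 else 0) * AJ (Sum.inl b.1) q'.1 = 0
          rw [hc', hAlr0 b.1 c' b.2, mul_zero])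
      · rw [Finset.sum_congr rfl (fun b _ => by
          show (if q.1 = Sum.inl u then g b.1 else 0) * AJ (Sum.inl b.1) q'.1
            = g b.1 * AT b.1 u
          rw [hc, if_pos rfl, hc', hAll b.1 u])]
        rw [hsum1 u, hATirr u, neg_zero]
  have hsplit := nullity_split D0 B12 B21 C0 M0 h1 h2 h3
  have hD : D0 = sadj (T.induce {a | a ≠ u}) (fun a b => σ₁ a.1 b.1) := by
    ext a b
    show (if T.Adj a.1 b.1 then σ₁ a.1 b.1 else 0)
      = (if (T.induce {a : V₁ | a ≠ u}).Adj a b then σ₁ a.1 b.1 else 0)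
    exact if_congr Iff.rfl rfl rfl
  have hC : C0 = sadj (J.induce {p | (∃ b, p = Sum.inr b) ∨ p = Sum.inl u})
      (fun p q => τ p.1 q.1) := by
    ext q q'
    show (if J.Adj q.1 q'.1 then τ q.1 q'.1 else 0)
      = (if (J.induce {p : V₁ ⊕ V₂ | (∃ b, p = Sum.inr b) ∨ p = Sum.inl u}).Adj q q'
          then τ q.1 q'.1 else 0)
    exact if_congr Iff.rfl rfl rfl
  have claim1 : nullity AJ =
      nullity (sadj (T.induce {a | a ≠ u}) (fun a b => σ₁ a.1 b.1)) +
      nullity (sadj (J.induce {p | (∃ b, p = Sum.inr b) ∨ p = Sum.inl u})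
          (fun p q => τ p.1 q.1)) := by
    rw [← nullity_submatrix_equiv e AJ, hsub, hsplit, hD, hC]
  -- the V₁-only congruence
  let e₁ : (↥({a : V₁ | a ≠ u}) ⊕ Unit) ≃ V₁ :=
    { toFun := Sum.elim (fun a => a.1) (fun _ => u)
      invFun := fun a => if h : a = u then Sum.inr () else Sum.inl ⟨a, h⟩
      left_inv := by
        rintro (a | b)
        · dsimp only [Sum.elim_inl]
          rw [dif_neg a.2]
        · dsimp only [Sum.elim_inr]
          rw [dif_pos rfl]
      right_inv := by
        intro a
        dsimp only
        by_cases h : a = u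
        · rw [dif_pos h]
          dsimp only [Sum.elim_inr]
          rw [h]
        · rw [dif_neg h]
          rfl }
  let B12u : Matrix (↥({a : V₁ | a ≠ u})) Unit ℝ := Matrix.of fun a _ => AT a.1 u
  let B21u : Matrix Unit (↥({a : V₁ | a ≠ u})) ℝ := Matrix.of fun _ a => AT u a.1
  let C22u : Matrix Unit Unit ℝ := Matrix.of fun _ _ => AT u u
  let M1 : Matrix Unit (↥({a : V₁ | a ≠ u})) ℝ := Matrix.of fun _ a => g a.1
  have hsub1 : AT.submatrix ⇑e₁ ⇑e₁ = Matrix.fromBlocks D0 B12u B21u C22u := by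
    ext i j
    cases i with
    | inl a => cases j with
      | inl b => rfl
      | inr _ => rfl
    | inr _ => cases j with
      | inl b => rfl
      | inr _ => rfl
  have h1' : M1 * D0 + B21u = 0 := by
    ext q a
    rw [Matrix.add_apply, Matrix.mul_apply, Matrix.zero_apply]
    show (∑ b : ↥({a : V₁ | a ≠ u}), g b.1 * AT b.1 a.1) + AT u a.1 = 0
    rw [hsum1 a.1, neg_add_cancel]
  have h2' : D0 * Matrix.transpose M1 + B12u = 0 := by
    ext a q
    rw [Matrix.add_apply, Matrix.mul_apply, Matrix.zero_apply]
    show (∑ b : ↥({a : V₁ | a ≠ u}), AT a.1 b.1 * g b.1) + AT a.1 u = 0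
    rw [hsum2 a.1, neg_add_cancel]
  have h3' : M1 * B12u = 0 := by
    ext q q'
    rw [Matrix.mul_apply, Matrix.zero_apply]
    show (∑ b : ↥({a : V₁ | a ≠ u}), g b.1 * AT b.1 u) = 0
    rw [hsum1 u, hATirr u, neg_zero]
  have hsplit1 := nullity_split D0 B12u B21u C22u M1 h1' h2' h3'
  have hB22 : C22u = (0 : Matrix Unit Unit ℝ) := by
    ext i j
    rw [Matrix.zero_apply]
    exact hATirr u
  have hnu : nullity (0 : Matrix Unit Unit ℝ) = 1 := by
    have h := nullity_add_rank (0 : Matrix Unit Unit ℝ)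
    rw [Matrix.rank_zero] at h
    simpa using h
  have claim2 : nullity AT =
      nullity (sadj (T.induce {a | a ≠ u}) (fun a b => σ₁ a.1 b.1)) + 1 := by
    rw [← nullity_submatrix_equiv e₁ AT, hsub1, hsplit1, hD, hB22, hnu]
  refine ⟨claim1, ?_⟩
  rw [claim1, claim2]
  push_cast
  ring
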